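/- Let X be a metric space with a discretization system: κ : ℕ → ℕ strictly increasing, φ_n ∈ C(X, ℝ^{κ(n)}), ψ_n ∈ C(φ_n(X), X), P_n = ψ_n ∘ φ_n, with sup_{x∈K} d_X(x, P_n(x)) → 0 for every compact K ⊂ X. Let Y be a Banach space, K ⊂ X compact, and G : K → Y continuous. Then for every ε > 0 there exist positive integers p, q, a continuous map G̃ : ℝ^{κ(q)} → ℝ^p, and a continuous map u : ℝ^p → Y such that sup_{v∈K} ‖G(v) − u(G̃(φ_q(v)))‖_Y < ε. -/
import Mathlib


/-- Approximation theorem for metric-to-Banach mappings.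
`X` is a metric space with a discretization system: `κ` strictly increasing,
encoders `φ n : X → ℝ^{κ n}` continuous, decoders `ψ n` continuous on `φ n '' X`,
projections `P n = ψ n ∘ φ n` converging uniformly to the identity on compact sets.
`Y` is a Banach space, `K ⊆ X` compact, `G` continuous on `K`. For every `ε > 0`
there are positive integers `p, q`, a continuous `G̃ : ℝ^{κ q} → ℝ^p` and a
continuous `u : ℝ^p → Y` with `sup_{v∈K} ‖G v − u (G̃ (φ q v))‖ < ε`. -/
theorem stmt_2 {X : Type*} [MetricSpace X] {Y : Type*} [NormedAddCommGroup Y]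
    [NormedSpace ℝ Y] [CompleteSpace Y]
    (κ : ℕ → ℕ) (hκ : StrictMono κ)
    (φ : ∀ n : ℕ, X → (Fin (κ n) → ℝ))
    (ψ : ∀ n : ℕ, (Fin (κ n) → ℝ) → X)
    (hφ : ∀ n, Continuous (φ n))
    (hψ : ∀ n, ContinuousOn (ψ n) (Set.range (φ n)))
    (hP : ∀ K : Set X, IsCompact K →
      ∀ ε > (0 : ℝ), ∃ N : ℕ, ∀ n ≥ N, ∀ x ∈ K, dist x (ψ n (φ n x)) < ε)
    (K : Set X) (hK : IsCompact K) (G : X → Y) (hG : ContinuousOn G K)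
    (ε : ℝ) (hε : 0 < ε) :
    ∃ (p q : ℕ) (Gt : (Fin (κ q) → ℝ) → (Fin p → ℝ)) (u : (Fin p → ℝ) → Y),
      0 < p ∧ 0 < q ∧ Continuous Gt ∧ Continuous u ∧
      ∀ v ∈ K, ‖G v - u (Gt (φ q v))‖ < ε := by
  classical
  rcases K.eq_empty_or_nonempty with hKe | hKne
  · exact ⟨1, 1, fun _ => 0, fun _ => 0, one_pos, one_pos, continuous_const, continuous_const,
      by simp [hKe]⟩
  -- uniform continuity of G on K
  have hGu := hK.uniformContinuousOn_of_continuous hG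
  rw [Metric.uniformContinuousOn_iff] at hGu
  obtain ⟨δ, hδ, hGδ⟩ := hGu (ε / 2) (by positivity)
  obtain ⟨N, hN⟩ := hP K hK (δ / 3) (by positivity)
  set q : ℕ := max N 1 with hqdef
  have hq1 : 0 < q := lt_of_lt_of_le one_pos (le_max_right _ _)
  have hPq : ∀ x ∈ K, dist x (ψ q (φ q x)) < δ / 3 := hN q (le_max_left _ _)
  set C : Set (Fin (κ q) → ℝ) := φ q '' K with hCdef
  have hCc : IsCompact C := hK.image (hφ q)
  have hψu := hCc.uniformContinuousOn_of_continuous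
    ((hψ q).mono (Set.image_subset_range _ _))
  rw [Metric.uniformContinuousOn_iff] at hψu
  obtain ⟨s, hs, hψs⟩ := hψu (δ / 3) (by positivity)
  -- finite subcover
  obtain ⟨t, htK, htcov⟩ := hK.elim_nhds_subcover
    (fun x => φ q ⁻¹' (Metric.ball (φ q x) (s / 2)))
    (fun x _ => (Metric.isOpen_ball.preimage (hφ q)).mem_nhds
      (by simp [Metric.mem_ball]; positivity))
  have htne : t.Nonempty := by
    obtain ⟨v0, hv0⟩ := hKne
    obtain ⟨x, hx, -⟩ := Set.mem_iUnion₂.mp (htcov hv0)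
    exact ⟨x, hx⟩
  set p : ℕ := t.card with hpdef
  have hp : 0 < p := Finset.card_pos.mpr htne
  set e := t.equivFin with hedef
  set xi : Fin p → X := fun i => (e.symm i : X) with hxidef
  have hxiK : ∀ i, xi i ∈ K := fun i => htK _ (e.symm i).2
  set c : Fin p → (Fin (κ q) → ℝ) := fun i => φ q (xi i) with hcdef
  set Gt : (Fin (κ q) → ℝ) → (Fin p → ℝ) := fun z i => max 0 (s - dist z (c i)) with hGtdef
  set u : (Fin p → ℝ) → Y := fun w =>
    (max (s / 2) (∑ i, max (w i) 0))⁻¹ • ∑ i, max (w i) 0 • G (xi i) with hudef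
  have hGtc : Continuous Gt := by
    apply continuous_pi
    intro i
    exact continuous_const.max (continuous_const.sub (continuous_id.dist continuous_const))
  have hden : ∀ w : Fin p → ℝ, max (s / 2) (∑ i, max (w i) 0) ≠ 0 := by
    intro w
    have : (0 : ℝ) < max (s / 2) (∑ i, max (w i) 0) :=
      lt_of_lt_of_le (by positivity) (le_max_left _ _)
    exact this.ne'
  have huc : Continuous u := by
    apply Continuous.smul
    · exact ((continuous_const.max (continuous_finset_sum _ fun i _ =>
        (continuous_apply i).max continuous_const)).inv₀ hden)
    · exact continuous_finset_sum _ fun i _ =>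
        ((continuous_apply i).max continuous_const).smul continuous_const
  refine ⟨p, q, Gt, u, hp, hq1, hGtc, huc, ?_⟩
  intro v hv
  set w : Fin p → ℝ := Gt (φ q v) with hwdef
  have hw0 : ∀ i, 0 ≤ w i := fun i => le_max_left _ _
  have hwmax : ∀ i, max (w i) 0 = w i := fun i => max_eq_left (hw0 i)
  -- key bound for positive weights
  have hbound : ∀ i, w i ≠ 0 → ‖G v - G (xi i)‖ ≤ ε / 2 := by
    intro i hi
    have hdist : dist (φ q v) (c i) < s := by
      by_contra h
      push_neg at h
      have : w i = 0 := by
        simp only [hwdef, hGtdef]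
        exact max_eq_left (by linarith)
      exact hi this
    have hvC : φ q v ∈ C := ⟨v, hv, rfl⟩
    have hciC : c i ∈ C := ⟨xi i, hxiK i, rfl⟩
    have h1 : dist (ψ q (φ q v)) (ψ q (c i)) < δ / 3 := hψs _ hvC _ hciC hdist
    have h2 := hPq v hv
    have h3 := hPq (xi i) (hxiK i)
    have hvd : dist v (xi i) < δ := by
      have := dist_triangle4 v (ψ q (φ q v)) (ψ q (φ q (xi i))) (xi i)
      rw [dist_comm (ψ q (φ q (xi i))) (xi i)] at this
      simp only [hcdef] at h1
      linarith
    have := hGδ v hv (xi i) (hxiK i) hvd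
    rw [dist_eq_norm] at this
    exact this.le
  -- lower bound on sum of weights
  have hScov : s / 2 < ∑ i, w i := by
    obtain ⟨x, hx, hxball⟩ := Set.mem_iUnion₂.mp (htcov hv)
    set i0 : Fin p := e ⟨x, hx⟩ with hi0
    have hxi0 : xi i0 = x := by simp [hxidef, hi0]
    have hd : dist (φ q v) (c i0) < s / 2 := by
      rw [hcdef]
      simpa [hxi0, Metric.mem_ball] using hxball
    have hwi0 : s / 2 < w i0 := by
      have : s / 2 < s - dist (φ q v) (c i0) := by linarith
      calc s / 2 < s - dist (φ q v) (c i0) := this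
        _ ≤ w i0 := le_max_right _ _
    calc s / 2 < w i0 := hwi0
      _ ≤ ∑ i, w i := Finset.single_le_sum (fun i _ => hw0 i) (Finset.mem_univ i0)
  set S : ℝ := ∑ i, w i with hSdef
  have hSpos : 0 < S := lt_trans (by positivity) hScov
  have hSne : S ≠ 0 := hSpos.ne'
  have hdeneq : max (s / 2) (∑ i, max (w i) 0) = S := by
    simp only [hwmax]
    exact max_eq_right hScov.le
  have huw : u w = S⁻¹ • ∑ i, w i • G (xi i) := by
    simp only [hudef, hwmax]
    rw [max_eq_right hScov.le]
  have hdiff : G v - u w = S⁻¹ • ∑ i, w i • (G v - G (xi i)) := by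
    rw [huw]
    have : ∑ i, w i • (G v - G (xi i)) = S • G v - ∑ i, w i • G (xi i) := by
      simp only [smul_sub, Finset.sum_sub_distrib, ← Finset.sum_smul, hSdef]
    rw [this, smul_sub, inv_smul_smul₀ hSne]
  rw [hdiff]
  have hnorm : ‖S⁻¹ • ∑ i, w i • (G v - G (xi i))‖ ≤ ε / 2 := by
    rw [norm_smul]
    have h1 : ‖∑ i, w i • (G v - G (xi i))‖ ≤ S * (ε / 2) := by
      calc ‖∑ i, w i • (G v - G (xi i))‖ ≤ ∑ i, ‖w i • (G v - G (xi i))‖ :=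
            norm_sum_le _ _
        _ ≤ ∑ i, w i * (ε / 2) := by
            apply Finset.sum_le_sum
            intro i _
            rw [norm_smul, Real.norm_eq_abs, abs_of_nonneg (hw0 i)]
            rcases eq_or_ne (w i) 0 with h | h
            · simp [h]
            · exact mul_le_mul_of_nonneg_left (hbound i h) (hw0 i)
        _ = S * (ε / 2) := by rw [← Finset.sum_mul]
    calc ‖S⁻¹‖ * ‖∑ i, w i • (G v - G (xi i))‖ ≤ ‖S⁻¹‖ * (S * (ε / 2)) := by
          apply mul_le_mul_of_nonneg_left h1 (norm_nonneg _)
      _ = ε / 2 := by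
          rw [Real.norm_eq_abs, abs_of_nonneg (inv_nonneg.mpr hSpos.le)]
          field_simp
  calc ‖S⁻¹ • ∑ i, w i • (G v - G (xi i))‖ ≤ ε / 2 := hnorm
    _ < ε := by linarith
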